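/- Let Γ be a finite simple graph with vertex set V = {1, …, n}, and suppose X = {1, …, m} is a clique of Γ. Then the quotient map ρ_X : P_Γ → P_m (killing all generators a_{ij} with {i,j} ⊄ {1,…,m}) fits in a split short exact sequence 1 → P_{n,m}/N → P_Γ → P_m → 1: ρ_X is surjective, admits a group-homomorphism section, and its kernel equals the subgroup of P_Γ generated by the images of the generators a_{ij} with m < j. -/

import Mathlib

abbrev PBIdx (n : ℕ) : Type := {p : Fin n × Fin n // p.1 < p.2}

namespace GraphicBraid

open scoped commutatorElement

def ofIdx {n : ℕ} {i j : Fin n} (h : i < j) : FreeGroup (PBIdx n) :=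
  FreeGroup.of ⟨(i, j), h⟩

/-- The Artin relators for the pure braid group `P_n`. -/
def pureBraidRels (n : ℕ) : Set (FreeGroup (PBIdx n)) :=
  {w | ∃ (i j r s : Fin n) (hij : i < j) (hrs : r < s),
      (s < i ∨ (i < r ∧ s < j)) ∧ w = ⁅ofIdx hij, ofIdx hrs⁆} ∪
  {w | ∃ (r i s j : Fin n) (hri : r < i) (his : i < s) (hsj : s < j),
      w = ⁅ofIdx (his.trans hsj), ofIdx hsj * ofIdx (hri.trans his) * (ofIdx hsj)⁻¹⁆} ∪
  {w | ∃ (i j r : Fin n) (hij : i < j) (hjr : j < r),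
      w = ⁅ofIdx hij * ofIdx (hij.trans hjr), ofIdx hjr⁆ ∨
      w = ⁅ofIdx hij, ofIdx (hij.trans hjr) * ofIdx hjr⁆}

/-- Relators killing the generators corresponding to non-edges of `Γ`. -/
def nonEdgeRels {n : ℕ} (Γ : SimpleGraph (Fin n)) : Set (FreeGroup (PBIdx n)) :=
  {w | ∃ p : PBIdx n, ¬ Γ.Adj p.1.1 p.1.2 ∧ w = FreeGroup.of p}

def graphicRels {n : ℕ} (Γ : SimpleGraph (Fin n)) : Set (FreeGroup (PBIdx n)) :=
  pureBraidRels n ∪ nonEdgeRels Γ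

/-- The graphic pure braid group `P_Γ`. -/
abbrev GPB {n : ℕ} (Γ : SimpleGraph (Fin n)) : Type := PresentedGroup (graphicRels Γ)

/-- The image of the Artin generator `a_{ij}` in `P_Γ`. -/
def agen {n : ℕ} (Γ : SimpleGraph (Fin n)) {i j : Fin n} (h : i < j) : GPB Γ :=
  PresentedGroup.of (rels := graphicRels Γ) ⟨(i, j), h⟩

/-- Relators killing the generators `a_{ij}` with `{i,j} ⊄ X`. -/
def killRels {n : ℕ} (X : Set (Fin n)) : Set (FreeGroup (PBIdx n)) :=
  {w | ∃ p : PBIdx n, ¬ (p.1.1 ∈ X ∧ p.1.2 ∈ X) ∧ w = FreeGroup.of p}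

/-- The quotient `P_X` of `P_Γ` obtained by killing all generators `a_{ij}` with `{i,j} ⊄ X`. -/
abbrev GPBX {n : ℕ} (Γ : SimpleGraph (Fin n)) (X : Set (Fin n)) : Type :=
  PresentedGroup (graphicRels Γ ∪ killRels X)

/-- The canonical surjection between presented groups when the set of relators grows. -/
def quotMap {α : Type*} {R S : Set (FreeGroup α)} (h : R ⊆ S) :
    PresentedGroup R →* PresentedGroup S :=
  QuotientGroup.map _ _ (MonoidHom.id _)
    (fun _ hx => Subgroup.normalClosure_mono h hx)

/-- The quotient map `ρ_X : P_Γ → P_X`. -/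
def rho {n : ℕ} (Γ : SimpleGraph (Fin n)) (X : Set (Fin n)) : GPB Γ →* GPBX Γ X :=
  quotMap Set.subset_union_left

lemma killRels_anti {n : ℕ} {X Y : Set (Fin n)} (h : X ⊆ Y) : killRels Y ⊆ killRels X := by
  rintro w ⟨p, hp, rfl⟩
  exact ⟨p, fun hx => hp ⟨h hx.1, h hx.2⟩, rfl⟩

/-- The quotient map `P_Y → P_X` for `X ⊆ Y`. -/
def rhoDown {n : ℕ} (Γ : SimpleGraph (Fin n)) {X Y : Set (Fin n)} (h : X ⊆ Y) :
    GPBX Γ Y →* GPBX Γ X :=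
  quotMap (Set.union_subset_union_right _ (killRels_anti h))

/-- `X` is a maximal clique of `Γ`. -/
def MaxClique {n : ℕ} (Γ : SimpleGraph (Fin n)) (X : Set (Fin n)) : Prop :=
  Γ.IsClique X ∧ ∀ Y : Set (Fin n), Γ.IsClique Y → X ⊆ Y → Y = X


/-- The subgroup of `P_Γ` generated by the generators `a_{ij}` with `{i,j} ⊆ X`. -/
def cliqueSubgroup {n : ℕ} (Γ : SimpleGraph (Fin n)) (X : Set (Fin n)) : Subgroup (GPB Γ) :=
  Subgroup.closure {g : GPB Γ | ∃ p : PBIdx n, (p.1.1 ∈ X ∧ p.1.2 ∈ X) ∧ g = PresentedGroup.of p}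

/-- The bipartite incidence graph of edges and 3-cliques (triangles) of `Γ`. -/
def incidenceGraph {n : ℕ} (Γ : SimpleGraph (Fin n)) :
    SimpleGraph (Γ.edgeSet ⊕ {T : Finset (Fin n) // Γ.IsNClique 3 T}) where
  Adj x y :=
    match x, y with
    | Sum.inl e, Sum.inr T => ∀ v : Fin n, v ∈ (e : Sym2 (Fin n)) → v ∈ T.1
    | Sum.inr T, Sum.inl e => ∀ v : Fin n, v ∈ (e : Sym2 (Fin n)) → v ∈ T.1
    | _, _ => False
  symm := ⟨by rintro (e | T) (f | S) h <;> exact h⟩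
  loopless := ⟨by rintro (e | T) h <;> exact h⟩

/-! ### Auxiliary material for Statement 2 -/

section GroupIdentities

variable {G : Type*} [Group G]

lemma conj_eq_of_comm {x y : G} (h : x * y = y * x) :
    y * x * y⁻¹ = x ∧ y⁻¹ * x * y = x := by
  constructor
  · rw [mul_inv_eq_iff_eq_mul]; exact h.symm
  · rw [mul_assoc, inv_mul_eq_iff_eq_mul]; exact h

lemma tri_d1 (A B C : G) (h1 : A * B * C = C * (A * B)) :
    A⁻¹ * C * A = B * C * B⁻¹ := by
  calc A⁻¹ * C * A = A⁻¹ * (C * (A * B)) * B⁻¹ := by group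
    _ = A⁻¹ * (A * B * C) * B⁻¹ := by rw [h1]
    _ = B * C * B⁻¹ := by group

lemma tri_d2 (A B C : G) (h1 : A * B * C = C * (A * B)) (h2 : A * (B * C) = B * C * A) :
    A * B * A⁻¹ = C⁻¹ * B * C := by
  calc A * B * A⁻¹ = C⁻¹ * (A * B * C) * A⁻¹ := by rw [h1]; group
    _ = C⁻¹ * (A * (B * C)) * A⁻¹ := by group
    _ = C⁻¹ * (B * C * A) * A⁻¹ := by rw [h2]
    _ = C⁻¹ * B * C := by group

lemma tri_d3 (A B C : G) (h1 : A * B * C = C * (A * B)) (h2 : A * (B * C) = B * C * A) :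
    A * C * A⁻¹ = C⁻¹ * B⁻¹ * C * B * C := by
  have hbc : A * (B * C) * A⁻¹ = B * C := by rw [h2]; group
  have hb := tri_d2 A B C h1 h2
  calc A * C * A⁻¹ = (A * B * A⁻¹)⁻¹ * (A * (B * C) * A⁻¹) := by group
    _ = (C⁻¹ * B * C)⁻¹ * (B * C) := by rw [hb, hbc]
    _ = C⁻¹ * B⁻¹ * C * B * C := by group

lemma tri_d4 (A B C : G) (h1 : A * B * C = C * (A * B)) (h2 : A * (B * C) = B * C * A) :
    A⁻¹ * B * A = B * C * B * C⁻¹ * B⁻¹ := by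
  have e : A⁻¹ * (C⁻¹ * B * C) * A = B := by rw [← tri_d2 A B C h1 h2]; group
  have d1 := tri_d1 A B C h1
  calc A⁻¹ * B * A
      = (A⁻¹ * C * A) * (A⁻¹ * (C⁻¹ * B * C) * A) * (A⁻¹ * C * A)⁻¹ := by group
    _ = (B * C * B⁻¹) * B * (B * C * B⁻¹)⁻¹ := by rw [d1, e]
    _ = B * C * B * C⁻¹ * B⁻¹ := by group

lemma link_d (D E F : G) (hc : E * (F * D * F⁻¹) = F * D * F⁻¹ * E) :
    D * E * D⁻¹ = (D * F * D⁻¹) * (F⁻¹ * E * F) * (D * F * D⁻¹)⁻¹ ∧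
    D⁻¹ * E * D = (D⁻¹ * F * D) * (F⁻¹ * E * F) * (D⁻¹ * F * D)⁻¹ := by
  have hx : (F⁻¹ * E * F) * D = D * (F⁻¹ * E * F) := by
    calc (F⁻¹ * E * F) * D = F⁻¹ * (E * (F * D * F⁻¹)) * F := by group
      _ = F⁻¹ * (F * D * F⁻¹ * E) * F := by rw [hc]
      _ = D * (F⁻¹ * E * F) := by group
  obtain ⟨c1, c2⟩ := conj_eq_of_comm hx
  constructor
  · calc D * E * D⁻¹
        = (D * F * D⁻¹) * (D * (F⁻¹ * E * F) * D⁻¹) * (D * F * D⁻¹)⁻¹ := by group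
      _ = _ := by rw [c1]
  · calc D⁻¹ * E * D
        = (D⁻¹ * F * D) * (D⁻¹ * (F⁻¹ * E * F) * D) * (D⁻¹ * F * D)⁻¹ := by group
      _ = _ := by rw [c2]

lemma conj_mem_of_gen {S : Set G} (g : G) (hg : ∀ t ∈ S, g * t * g⁻¹ ∈ Subgroup.closure S) :
    ∀ x ∈ Subgroup.closure S, g * x * g⁻¹ ∈ Subgroup.closure S := by
  intro x hx
  have h2 : Subgroup.map (MulAut.conj g).toMonoidHom (Subgroup.closure S) ≤
      Subgroup.closure S := by
    rw [MonoidHom.map_closure]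
    refine (Subgroup.closure_le _).mpr ?_
    rintro y ⟨t, ht, rfl⟩
    simpa [MulAut.conj_apply] using hg t ht
  exact h2 ⟨x, hx, by simp [MulAut.conj_apply]⟩

end GroupIdentities

section Statement2

variable {n : ℕ}

lemma mk_rel_one (Γ : SimpleGraph (Fin n)) {r : FreeGroup (PBIdx n)} (h : r ∈ graphicRels Γ) :
    PresentedGroup.mk (graphicRels Γ) r = 1 :=
  (QuotientGroup.eq_one_iff _).mpr (Subgroup.subset_normalClosure h)

lemma comm_rel (Γ : SimpleGraph (Fin n)) {i j r s : Fin n} (hij : i < j) (hrs : r < s)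
    (hc : s < i ∨ (i < r ∧ s < j)) :
    agen Γ hij * agen Γ hrs = agen Γ hrs * agen Γ hij := by
  have h1 : PresentedGroup.mk (graphicRels Γ) ⁅ofIdx hij, ofIdx hrs⁆ = 1 :=
    mk_rel_one Γ (Or.inl (Or.inl (Or.inl ⟨i, j, r, s, hij, hrs, hc, rfl⟩)))
  rw [map_commutatorElement] at h1
  exact commutatorElement_eq_one_iff_mul_comm.mp h1

lemma rel3a (Γ : SimpleGraph (Fin n)) {i j k : Fin n} (hij : i < j) (hjk : j < k) :
    agen Γ hij * agen Γ (hij.trans hjk) * agen Γ hjk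
      = agen Γ hjk * (agen Γ hij * agen Γ (hij.trans hjk)) := by
  have h1 : PresentedGroup.mk (graphicRels Γ)
      ⁅ofIdx hij * ofIdx (hij.trans hjk), ofIdx hjk⁆ = 1 :=
    mk_rel_one Γ (Or.inl (Or.inr ⟨i, j, k, hij, hjk, Or.inl rfl⟩))
  rw [map_commutatorElement, map_mul] at h1
  exact commutatorElement_eq_one_iff_mul_comm.mp h1

lemma rel3b (Γ : SimpleGraph (Fin n)) {i j k : Fin n} (hij : i < j) (hjk : j < k) :
    agen Γ hij * (agen Γ (hij.trans hjk) * agen Γ hjk)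
      = agen Γ (hij.trans hjk) * agen Γ hjk * agen Γ hij := by
  have h1 : PresentedGroup.mk (graphicRels Γ)
      ⁅ofIdx hij, ofIdx (hij.trans hjk) * ofIdx hjk⁆ = 1 :=
    mk_rel_one Γ (Or.inl (Or.inr ⟨i, j, k, hij, hjk, Or.inr rfl⟩))
  rw [map_commutatorElement, map_mul] at h1
  exact commutatorElement_eq_one_iff_mul_comm.mp h1

lemma rel2 (Γ : SimpleGraph (Fin n)) {r i s j : Fin n} (hri : r < i) (his : i < s)
    (hsj : s < j) :
    agen Γ (his.trans hsj) * (agen Γ hsj * agen Γ (hri.trans his) * (agen Γ hsj)⁻¹)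
      = agen Γ hsj * agen Γ (hri.trans his) * (agen Γ hsj)⁻¹ * agen Γ (his.trans hsj) := by
  have h1 : PresentedGroup.mk (graphicRels Γ)
      ⁅ofIdx (his.trans hsj), ofIdx hsj * ofIdx (hri.trans his) * (ofIdx hsj)⁻¹⁆ = 1 :=
    mk_rel_one Γ (Or.inl (Or.inl (Or.inr ⟨r, i, s, j, hri, his, hsj, rfl⟩)))
  rw [map_commutatorElement, map_mul, map_mul, map_inv] at h1
  exact commutatorElement_eq_one_iff_mul_comm.mp h1

/-- The subgroup of `P_Γ` generated by the generators `a_{ij}` with `m ≤ j`. -/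
def kerGens (m : ℕ) (Γ : SimpleGraph (Fin n)) : Subgroup (GPB Γ) :=
  Subgroup.closure {g : GPB Γ | ∃ p : PBIdx n, m ≤ (p.1.2 : ℕ) ∧ g = PresentedGroup.of p}

lemma mem_kerGens {m : ℕ} (Γ : SimpleGraph (Fin n)) {i j : Fin n} (h : i < j)
    (hm : m ≤ (j : ℕ)) : agen Γ h ∈ kerGens m Γ :=
  Subgroup.subset_closure ⟨⟨(i, j), h⟩, hm, rfl⟩

lemma conj_agen_mem {m : ℕ} (Γ : SimpleGraph (Fin n)) {i j r s : Fin n}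
    (hij : i < j) (hrs : r < s) (hj : m ≤ (j : ℕ)) :
    agen Γ hrs * agen Γ hij * (agen Γ hrs)⁻¹ ∈ kerGens m Γ ∧
    (agen Γ hrs)⁻¹ * agen Γ hij * agen Γ hrs ∈ kerGens m Γ := by
  by_cases hs : m ≤ (s : ℕ)
  · have h1 := mem_kerGens Γ hrs hs
    have h2 := mem_kerGens Γ hij hj
    exact ⟨mul_mem (mul_mem h1 h2) (inv_mem h1), mul_mem (mul_mem (inv_mem h1) h2) h1⟩
  push_neg at hs
  have hsj : s < j := by rw [Fin.lt_def]; omega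
  rcases lt_trichotomy s i with hsi | hsi | his
  · obtain ⟨c1, c2⟩ := conj_eq_of_comm (comm_rel Γ hij hrs (Or.inl hsi))
    exact ⟨by rw [c1]; exact mem_kerGens Γ hij hj,
           by rw [c2]; exact mem_kerGens Γ hij hj⟩
  · subst hsi
    -- triple (r, s, j) with conjugator `a_{rs}` and target `a_{sj}`
    have h1 := rel3a Γ hrs hij
    have h2 := rel3b Γ hrs hij
    have hB := mem_kerGens Γ (hrs.trans hij) hj
    have hC := mem_kerGens Γ hij hj
    constructor
    · rw [tri_d3 _ _ _ h1 h2]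
      exact mul_mem (mul_mem (mul_mem (mul_mem (inv_mem hC) (inv_mem hB)) hC) hB) hC
    · rw [tri_d1 _ _ _ h1]
      exact mul_mem (mul_mem hB hC) (inv_mem hB)
  · rcases lt_trichotomy r i with hri | hri | hir
    · -- linked case `r < i < s < j`
      have hc : agen Γ hij * (agen Γ hsj * agen Γ hrs * (agen Γ hsj)⁻¹)
          = agen Γ hsj * agen Γ hrs * (agen Γ hsj)⁻¹ * agen Γ hij := rel2 Γ hri his hsj
      obtain ⟨l1, l2⟩ := link_d (agen Γ hrs) (agen Γ hij) (agen Γ hsj) hc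
      have h1 := rel3a Γ hrs hsj
      have h2 := rel3b Γ hrs hsj
      have hB := mem_kerGens Γ (hrs.trans hsj) hj
      have hC := mem_kerGens Γ hsj hj
      have hE := mem_kerGens Γ hij hj
      have hDFD : agen Γ hrs * agen Γ hsj * (agen Γ hrs)⁻¹ ∈ kerGens m Γ := by
        rw [tri_d3 _ _ _ h1 h2]
        exact mul_mem (mul_mem (mul_mem (mul_mem (inv_mem hC) (inv_mem hB)) hC) hB) hC
      have hDFD' : (agen Γ hrs)⁻¹ * agen Γ hsj * agen Γ hrs ∈ kerGens m Γ := by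
        rw [tri_d1 _ _ _ h1]
        exact mul_mem (mul_mem hB hC) (inv_mem hB)
      have hE' : (agen Γ hsj)⁻¹ * agen Γ hij * agen Γ hsj ∈ kerGens m Γ :=
        mul_mem (mul_mem (inv_mem hC) hE) hC
      exact ⟨by rw [l1]; exact mul_mem (mul_mem hDFD hE') (inv_mem hDFD),
             by rw [l2]; exact mul_mem (mul_mem hDFD' hE') (inv_mem hDFD')⟩
    · subst hri
      -- triple (i, s, j) with conjugator `a_{is}` and target `a_{ij}`
      have h1 : agen Γ hrs * agen Γ hij * agen Γ hsj
          = agen Γ hsj * (agen Γ hrs * agen Γ hij) := rel3a Γ hrs hsj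
      have h2 : agen Γ hrs * (agen Γ hij * agen Γ hsj)
          = agen Γ hij * agen Γ hsj * agen Γ hrs := rel3b Γ hrs hsj
      have hB := mem_kerGens Γ hij hj
      have hC := mem_kerGens Γ hsj hj
      constructor
      · rw [tri_d2 _ _ _ h1 h2]
        exact mul_mem (mul_mem (inv_mem hC) hB) hC
      · rw [tri_d4 _ _ _ h1 h2]
        exact mul_mem (mul_mem (mul_mem (mul_mem hB hC) hB) (inv_mem hC)) (inv_mem hB)
    · obtain ⟨c1, c2⟩ := conj_eq_of_comm (comm_rel Γ hij hrs (Or.inr ⟨hir, hsj⟩))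
      exact ⟨by rw [c1]; exact mem_kerGens Γ hij hj,
             by rw [c2]; exact mem_kerGens Γ hij hj⟩

lemma kerGens_normal (m : ℕ) (Γ : SimpleGraph (Fin n)) : (kerGens m Γ).Normal := by
  have key : ∀ q : PBIdx n,
      (PresentedGroup.of q : GPB Γ) ∈ Subgroup.normalizer (kerGens m Γ : Set (GPB Γ)) := by
    rintro ⟨⟨r, s⟩, hrs⟩
    rw [Subgroup.mem_normalizer_iff]
    set g : GPB Γ := PresentedGroup.of ⟨(r, s), hrs⟩ with hg
    have c1 : ∀ t ∈ {g : GPB Γ | ∃ p : PBIdx n, m ≤ (p.1.2 : ℕ) ∧ g = PresentedGroup.of p},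
        g * t * g⁻¹ ∈ kerGens m Γ := by
      rintro t ⟨⟨⟨i, j⟩, hij⟩, hjm, rfl⟩
      exact (conj_agen_mem Γ hij hrs hjm).1
    have c2 : ∀ t ∈ {g : GPB Γ | ∃ p : PBIdx n, m ≤ (p.1.2 : ℕ) ∧ g = PresentedGroup.of p},
        g⁻¹ * t * (g⁻¹)⁻¹ ∈ kerGens m Γ := by
      rintro t ⟨⟨⟨i, j⟩, hij⟩, hjm, rfl⟩
      rw [inv_inv]
      exact (conj_agen_mem Γ hij hrs hjm).2
    intro x
    constructor
    · intro hx; exact conj_mem_of_gen g c1 x hx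
    · intro hx
      have h := conj_mem_of_gen g⁻¹ c2 _ hx
      rwa [show g⁻¹ * (g * x * g⁻¹) * (g⁻¹)⁻¹ = x by group] at h
  constructor
  intro x hx gg
  have hgnorm : gg ∈ Subgroup.normalizer (kerGens m Γ : Set (GPB Γ)) :=
    PresentedGroup.generated_by _ _ key gg
  exact (Subgroup.mem_normalizer_iff.mp hgnorm x).mp hx

/-- The section of `ρ_X` on generators. -/
def secFun (m : ℕ) (Γ : SimpleGraph (Fin n)) : PBIdx n → GPB Γ :=
  fun p => if (p.1.2 : ℕ) < m then PresentedGroup.of p else 1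

lemma secFun_rels (m : ℕ) (Γ : SimpleGraph (Fin n)) :
    ∀ r ∈ graphicRels Γ ∪ killRels {v : Fin n | (v : ℕ) < m},
      FreeGroup.lift (secFun m Γ) r = 1 := by
  rintro w ((((⟨i, j, r, s, hij, hrs, hcond, rfl⟩ | ⟨r, i, s, j, hri, his, hsj, rfl⟩) |
      ⟨i, j, r, hij, hjr, hw⟩) | ⟨p, hp, rfl⟩) | ⟨p, hp, rfl⟩)
  · rw [map_commutatorElement]
    simp only [ofIdx, FreeGroup.lift_apply_of, secFun]
    split_ifs
    · exact commutatorElement_eq_one_iff_mul_comm.mpr (comm_rel Γ hij hrs hcond)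
    all_goals (simp only [commutatorElement_def]; group)
  · rw [map_commutatorElement, map_mul, map_mul, map_inv]
    simp only [ofIdx, FreeGroup.lift_apply_of, secFun]
    split_ifs
    · exact commutatorElement_eq_one_iff_mul_comm.mpr (rel2 Γ hri his hsj)
    all_goals (simp only [commutatorElement_def]; group)
  · have hjr' : (j : ℕ) < (r : ℕ) := Fin.lt_def.mp hjr
    rcases hw with rfl | rfl
    · rw [map_commutatorElement, map_mul]
      simp only [ofIdx, FreeGroup.lift_apply_of, secFun]
      split_ifs
      · exact commutatorElement_eq_one_iff_mul_comm.mpr (rel3a Γ hij hjr)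
      all_goals first
        | (simp only [commutatorElement_def]; group; done)
        | omega
    · rw [map_commutatorElement, map_mul]
      simp only [ofIdx, FreeGroup.lift_apply_of, secFun]
      split_ifs
      · exact commutatorElement_eq_one_iff_mul_comm.mpr (rel3b Γ hij hjr)
      all_goals first
        | (simp only [commutatorElement_def]; group; done)
        | omega
  · simp only [FreeGroup.lift_apply_of, secFun]
    split_ifs
    · exact mk_rel_one Γ (Or.inr ⟨p, hp, rfl⟩)
    · rfl
  · simp only [FreeGroup.lift_apply_of, secFun]
    rw [if_neg]
    intro hlt
    exact hp ⟨Nat.lt_trans (Fin.lt_def.mp p.2) hlt, hlt⟩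

end Statement2

/-- If `X = {1, …, m}` is a clique of `Γ`, then `ρ_X : P_Γ → P_m` is a split
surjection whose kernel is the subgroup generated by the images of the generators `a_{ij}`
with `m < j`. -/
theorem clique_deletion_split_exact {n m : ℕ} (Γ : SimpleGraph (Fin n)) (hm : m ≤ n)
    (hclique : Γ.IsClique {v : Fin n | (v : ℕ) < m}) :
    Function.Surjective (rho Γ {v : Fin n | (v : ℕ) < m}) ∧
    (∃ s : GPBX Γ {v : Fin n | (v : ℕ) < m} →* GPB Γ,
      (rho Γ {v : Fin n | (v : ℕ) < m}).comp s = MonoidHom.id _) ∧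
    MonoidHom.ker (rho Γ {v : Fin n | (v : ℕ) < m}) =
      Subgroup.closure
        {g : GPB Γ | ∃ p : PBIdx n, m ≤ (p.1.2 : ℕ) ∧ g = PresentedGroup.of p} := by
  refine ⟨?_, ?_, ?_⟩
  · -- surjectivity
    intro x
    obtain ⟨w, rfl⟩ := PresentedGroup.mk_surjective _ x
    exact ⟨PresentedGroup.mk _ w, rfl⟩
  · -- the splitting
    refine ⟨PresentedGroup.toGroup (secFun_rels m Γ), ?_⟩
    refine PresentedGroup.ext fun p => ?_
    rw [MonoidHom.comp_apply, MonoidHom.id_apply, PresentedGroup.toGroup.of]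
    by_cases hpm : ((p.1.2 : ℕ) < m)
    · simp only [secFun]
      rw [if_pos hpm]; rfl
    · simp only [secFun]
      rw [if_neg hpm, map_one]
      have h1 : (PresentedGroup.of (rels := graphicRels Γ ∪ killRels {v : Fin n | (v : ℕ) < m})
          p) = 1 :=
        (QuotientGroup.eq_one_iff (FreeGroup.of p)).mpr (Subgroup.subset_normalClosure
          (Or.inr ⟨p, fun hx => hpm hx.2, rfl⟩))
      exact h1.symm
  · -- the kernel
    have hker : (rho Γ {v : Fin n | (v : ℕ) < m}).ker =
        Subgroup.map (PresentedGroup.mk (graphicRels Γ))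
          (Subgroup.normalClosure (graphicRels Γ ∪ killRels {v : Fin n | (v : ℕ) < m})) := by
      ext x
      constructor
      · intro hx
        obtain ⟨w, rfl⟩ := PresentedGroup.mk_surjective _ x
        exact ⟨w, (QuotientGroup.eq_one_iff w).mp hx, rfl⟩
      · rintro ⟨w, hw, rfl⟩
        exact (QuotientGroup.eq_one_iff w).mpr hw
    rw [hker, Subgroup.map_normalClosure _ _ (PresentedGroup.mk_surjective _)]
    haveI := kerGens_normal (n := n) m Γ
    apply le_antisymm
    · apply Subgroup.normalClosure_le_normal (N := kerGens m Γ)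
      rintro g ⟨w, hw, rfl⟩
      rcases hw with h | ⟨p, hp, rfl⟩
      · rw [mk_rel_one Γ h]; exact one_mem _
      · refine Subgroup.subset_closure ⟨p, ?_, rfl⟩
        by_contra hlt
        push_neg at hlt
        exact hp ⟨Nat.lt_trans (Fin.lt_def.mp p.2) hlt, hlt⟩
    · refine (Subgroup.closure_le _).mpr ?_
      rintro g ⟨p, hp, rfl⟩
      refine Subgroup.subset_normalClosure ⟨FreeGroup.of p, Or.inr ⟨p, ?_, rfl⟩, rfl⟩
      exact fun hx => absurd hx.2 (by simpa using Nat.not_lt.mpr hp)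

end GraphicBraid
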